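/- If the expert π^E is a weak Dominant Strategy Equilibrium, then any behavioral cloning policy π with BC error ε_BC ≤ ε(1−γ)²/(2n) is an ε-Nash equilibrium, i.e. NashGap(π) ≤ ε. -/

import Mathlib

open scoped BigOperators

namespace MAIL

/-- An `n`-player Markov Game with finite state space `S` and finite
per-player action spaces `A i` (joint actions are dependent functions). -/
structure Game (n : ℕ) (S : Type) (A : Fin n → Type) [Fintype S] [∀ i, Fintype (A i)] where
  P : S → (∀ i, A i) → S → ℝ
  r : Fin n → S → (∀ i, A i) → ℝ
  ν₀ : S → ℝ
  γ : ℝ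

variable {n : ℕ} {S : Type} {A : Fin n → Type} [Fintype S] [∀ i, Fintype (A i)]

/-- A (per-player or joint) policy is a probability distribution over actions at each state. -/
def IsPol {B : Type} [Fintype B] (π : S → B → ℝ) : Prop :=
  (∀ s b, 0 ≤ π s b) ∧ ∀ s, ∑ b, π s b = 1

/-- Standard validity assumptions on a game: `γ ∈ [0,1)`, `ν₀` a distribution,
`P` a transition kernel, rewards bounded in `[-1,1]`. -/
def IsGame (G : Game n S A) : Prop :=
  0 ≤ G.γ ∧ G.γ < 1 ∧ (∀ s, 0 ≤ G.ν₀ s) ∧ (∑ s, G.ν₀ s = 1) ∧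
    (∀ s a, (∀ s', 0 ≤ G.P s a s') ∧ ∑ s', G.P s a s' = 1) ∧
    (∀ i s a, |G.r i s a| ≤ 1)

/-- Joint (product) policy induced by independent per-player policies. -/
def joint (π : ∀ i, S → A i → ℝ) : S → (∀ i, A i) → ℝ :=
  fun s a => ∏ i, π i s (a i)

/-- `stateDist G π t s = P(s_t = s)` when rolling out joint policy `π`. -/
def stateDist (G : Game n S A) (π : S → (∀ i, A i) → ℝ) : ℕ → S → ℝ
  | 0 => G.ν₀
  | t + 1 => fun s' => ∑ s : S, ∑ a : (∀ i, A i), stateDist G π t s * π s a * G.P s a s'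

/-- Discounted state occupancy measure `μ_π(s) = (1-γ) ∑_t γ^t P(s_t = s)`. -/
noncomputable def occ (G : Game n S A) (π : S → (∀ i, A i) → ℝ) (s : S) : ℝ :=
  (1 - G.γ) * ∑' t : ℕ, G.γ ^ t * stateDist G π t s

/-- State-action occupancy measure `ρ_π(s,a) = μ_π(s) π(a|s)`. -/
noncomputable def saOcc (G : Game n S A) (π : S → (∀ i, A i) → ℝ)
    (s : S) (a : ∀ i, A i) : ℝ :=
  occ G π s * π s a

/-- Player `i`'s value `V_i^π(ν₀) = (1/(1-γ)) E_{(s,a)∼ρ_π}[r_i(s,a)]`. -/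
noncomputable def value (G : Game n S A) (i : Fin n) (π : S → (∀ i, A i) → ℝ) : ℝ :=
  (1 / (1 - G.γ)) * ∑ s : S, ∑ a : (∀ i, A i), saOcc G π s a * G.r i s a

/-- Player `i`'s value started from the Dirac distribution at state `s`. -/
noncomputable def valueFrom [DecidableEq S] (G : Game n S A) (i : Fin n)
    (π : S → (∀ i, A i) → ℝ) (s₀ : S) : ℝ :=
  value { G with ν₀ := fun s => if s = s₀ then 1 else 0 } i π

/-- State-action value `Q_i^π(s,a) = r_i(s,a) + γ ∑_{s'} P(s'|s,a) V_i^π(s')`. -/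
noncomputable def Qf [DecidableEq S] (G : Game n S A) (i : Fin n)
    (π : S → (∀ i, A i) → ℝ) (s : S) (a : ∀ i, A i) : ℝ :=
  G.r i s a + G.γ * ∑ s' : S, G.P s a s' * valueFrom G i π s'

/-- Unilateral deviation: player `i` switches to `πi'`, the others keep `π`. -/
def dev (π : ∀ i, S → A i → ℝ) (i : Fin n) (πi' : S → A i → ℝ) :
    ∀ j, S → A j → ℝ :=
  Function.update π i πi'

/-- Behavioral-cloning error of player `i`:
`E_{s ∼ μ_{π^E}} ‖π_i(·|s) − π^E_i(·|s)‖₁`. -/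
noncomputable def bcErr (G : Game n S A) (πE π : ∀ i, S → A i → ℝ) (i : Fin n) : ℝ :=
  ∑ s : S, occ G (joint πE) s * ∑ b : A i, |π i s b - πE i s b|

end MAIL

namespace MAIL

section Aux

variable {n : ℕ} {S : Type} {A : Fin n → Type} [Fintype S] [∀ i, Fintype (A i)]

lemma isPol_joint {π : ∀ i, S → A i → ℝ} (h : ∀ i, IsPol (π i)) : IsPol (joint π) := by
  constructor
  · intro s a
    exact Finset.prod_nonneg fun i _ => (h i).1 s (a i)
  · intro s
    have h1 : (∏ i, ∑ b, π i s b) = ∑ a : ∀ i, A i, ∏ i, π i s (a i) :=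
      Fintype.prod_sum _
    simp only [joint]
    rw [← h1]
    simp [fun i => (h i).2 s]

lemma stateDist_nonneg (G : Game n S A) (hG : IsGame G) {π : S → (∀ i, A i) → ℝ}
    (hπ : IsPol π) : ∀ t s, 0 ≤ stateDist G π t s := by
  intro t
  induction t with
  | zero => exact hG.2.2.1
  | succ t ih =>
    intro s'
    apply Finset.sum_nonneg; intro s _
    apply Finset.sum_nonneg; intro a _
    exact mul_nonneg (mul_nonneg (ih s) (hπ.1 s a)) ((hG.2.2.2.2.1 s a).1 s')

lemma stateDist_sum (G : Game n S A) (hG : IsGame G) {π : S → (∀ i, A i) → ℝ}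
    (hπ : IsPol π) : ∀ t, ∑ s, stateDist G π t s = 1 := by
  intro t
  induction t with
  | zero => exact hG.2.2.2.1
  | succ t ih =>
    show (∑ s' : S, ∑ s : S, ∑ a : (∀ i, A i),
        stateDist G π t s * π s a * G.P s a s') = 1
    rw [Finset.sum_comm]
    have h1 : ∀ s : S, (∑ s' : S, ∑ a : (∀ i, A i),
        stateDist G π t s * π s a * G.P s a s') = stateDist G π t s := by
      intro s
      rw [Finset.sum_comm]
      have h2 : ∀ a : (∀ i, A i), (∑ s' : S, stateDist G π t s * π s a * G.P s a s')
          = stateDist G π t s * π s a := by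
        intro a
        rw [← Finset.mul_sum, (hG.2.2.2.2.1 s a).2, mul_one]
      rw [Finset.sum_congr rfl (fun a _ => h2 a), ← Finset.mul_sum, hπ.2 s, mul_one]
    rw [Finset.sum_congr rfl (fun s _ => h1 s), ih]

lemma stateDist_le_one (G : Game n S A) (hG : IsGame G) {π : S → (∀ i, A i) → ℝ}
    (hπ : IsPol π) (t : ℕ) (s : S) : stateDist G π t s ≤ 1 := by
  rw [← stateDist_sum G hG hπ t]
  exact Finset.single_le_sum (fun s' _ => stateDist_nonneg G hG hπ t s') (Finset.mem_univ s)

lemma summable_sd (G : Game n S A) (hG : IsGame G) {π : S → (∀ i, A i) → ℝ}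
    (hπ : IsPol π) (s : S) : Summable (fun t => G.γ ^ t * stateDist G π t s) := by
  refine Summable.of_nonneg_of_le
    (fun t => mul_nonneg (pow_nonneg hG.1 t) (stateDist_nonneg G hG hπ t s))
    (fun t => ?_) (summable_geometric_of_lt_one hG.1 hG.2.1)
  calc G.γ ^ t * stateDist G π t s ≤ G.γ ^ t * 1 :=
        mul_le_mul_of_nonneg_left (stateDist_le_one G hG hπ t s) (pow_nonneg hG.1 t)
    _ = G.γ ^ t := mul_one _

lemma occ_nonneg (G : Game n S A) (hG : IsGame G) {π : S → (∀ i, A i) → ℝ}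
    (hπ : IsPol π) (s : S) : 0 ≤ occ G π s := by
  apply mul_nonneg (by linarith [hG.2.1])
  exact tsum_nonneg fun t =>
    mul_nonneg (pow_nonneg hG.1 t) (stateDist_nonneg G hG hπ t s)

lemma abs_tsum_le' {f : ℕ → ℝ} (h : Summable fun t => |f t|) :
    |∑' t, f t| ≤ ∑' t, |f t| := by
  simpa [Real.norm_eq_abs] using
    norm_tsum_le_tsum_norm (f := f) (by simpa [Real.norm_eq_abs] using h)

set_option maxHeartbeats 1000000 in
/-- Key value comparison lemma. -/
lemma value_diff_le (G : Game n S A) (hG : IsGame G) {μ ν : S → (∀ i, A i) → ℝ}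
    (hμ : IsPol μ) (hν : IsPol ν) (i : Fin n) :
    |value G i μ - value G i ν| ≤
      (1 / (1 - G.γ) ^ 2) * ∑ s, occ G ν s * ∑ a, |μ s a - ν s a| := by
  have hγ0 := hG.1
  have hγ1 := hG.2.1
  have h1γ : (0:ℝ) < 1 - G.γ := by linarith
  set d : ℕ → ℝ := fun t => ∑ s, |stateDist G μ t s - stateDist G ν t s| with hd_def
  set L : S → ℝ := fun s => ∑ a, |μ s a - ν s a| with hL_def
  set e : ℕ → ℝ := fun t => ∑ s, stateDist G ν t s * L s with he_def
  have hL_nonneg : ∀ s, 0 ≤ L s := fun s => Finset.sum_nonneg fun a _ => abs_nonneg _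
  have hL_le : ∀ s, L s ≤ 2 := by
    intro s
    have : ∀ a : (∀ i, A i), |μ s a - ν s a| ≤ μ s a + ν s a := by
      intro a
      have := abs_sub (μ s a) (ν s a)
      rw [abs_of_nonneg (hμ.1 s a), abs_of_nonneg (hν.1 s a)] at this
      exact this
    calc L s ≤ ∑ a, (μ s a + ν s a) := Finset.sum_le_sum fun a _ => this a
      _ = 2 := by rw [Finset.sum_add_distrib, hμ.2 s, hν.2 s]; norm_num
  have hd_nonneg : ∀ t, 0 ≤ d t := fun t => Finset.sum_nonneg fun s _ => abs_nonneg _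
  have hd_le : ∀ t, d t ≤ 2 := by
    intro t
    have : ∀ s : S, |stateDist G μ t s - stateDist G ν t s| ≤
        stateDist G μ t s + stateDist G ν t s := by
      intro s
      have := abs_sub (stateDist G μ t s) (stateDist G ν t s)
      rw [abs_of_nonneg (stateDist_nonneg G hG hμ t s),
        abs_of_nonneg (stateDist_nonneg G hG hν t s)] at this
      exact this
    calc d t ≤ ∑ s, (stateDist G μ t s + stateDist G ν t s) :=
          Finset.sum_le_sum fun s _ => this s
      _ = 2 := by
          rw [Finset.sum_add_distrib, stateDist_sum G hG hμ t, stateDist_sum G hG hν t]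
          norm_num
  have he_nonneg : ∀ t, 0 ≤ e t := fun t => Finset.sum_nonneg fun s _ =>
    mul_nonneg (stateDist_nonneg G hG hν t s) (hL_nonneg s)
  have he_le : ∀ t, e t ≤ 2 := by
    intro t
    calc e t ≤ ∑ s, stateDist G ν t s * 2 := Finset.sum_le_sum fun s _ =>
          mul_le_mul_of_nonneg_left (hL_le s) (stateDist_nonneg G hG hν t s)
      _ = 2 := by rw [← Finset.sum_mul, stateDist_sum G hG hν t, one_mul]
  -- summability helpers
  have hsum_geom2 : Summable (fun t : ℕ => G.γ ^ t * 2) :=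
    (summable_geometric_of_lt_one hγ0 hγ1).mul_right 2
  have hsummable : ∀ (f : ℕ → ℝ), (∀ t, 0 ≤ f t) → (∀ t, f t ≤ 2) →
      Summable (fun t => G.γ ^ t * f t) := by
    intro f h0 h2
    refine Summable.of_nonneg_of_le
      (fun t => mul_nonneg (pow_nonneg hγ0 t) (h0 t)) (fun t => ?_) hsum_geom2
    exact mul_le_mul_of_nonneg_left (h2 t) (pow_nonneg hγ0 t)
  have hsd : Summable (fun t => G.γ ^ t * d t) := hsummable d hd_nonneg hd_le
  have hse : Summable (fun t => G.γ ^ t * e t) := hsummable e he_nonneg he_le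
  set X : ℝ := ∑' t, G.γ ^ t * d t with hX_def
  set E : ℝ := ∑' t, G.γ ^ t * e t with hE_def
  have hX_nonneg : 0 ≤ X := tsum_nonneg fun t =>
    mul_nonneg (pow_nonneg hγ0 t) (hd_nonneg t)
  have hE_nonneg : 0 ≤ E := tsum_nonneg fun t =>
    mul_nonneg (pow_nonneg hγ0 t) (he_nonneg t)
  -- d 0 = 0
  have hd0 : d 0 = 0 := by
    simp [hd_def, stateDist]
  -- d (t+1) ≤ d t + e t
  have hdrec : ∀ t, d (t + 1) ≤ d t + e t := by
    intro t
    have step1 : d (t + 1) ≤ ∑ s' : S, ∑ s : S, ∑ a : (∀ i, A i),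
        |stateDist G μ t s * μ s a - stateDist G ν t s * ν s a| * G.P s a s' := by
      apply Finset.sum_le_sum
      intro s' _
      show |stateDist G μ (t+1) s' - stateDist G ν (t+1) s'| ≤ _
      have hrw : stateDist G μ (t+1) s' - stateDist G ν (t+1) s' =
          ∑ s : S, ∑ a : (∀ i, A i),
            (stateDist G μ t s * μ s a - stateDist G ν t s * ν s a) * G.P s a s' := by
        show (∑ s : S, ∑ a : (∀ i, A i), stateDist G μ t s * μ s a * G.P s a s') -
            (∑ s : S, ∑ a : (∀ i, A i), stateDist G ν t s * ν s a * G.P s a s') = _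
        rw [← Finset.sum_sub_distrib]
        congr 1; funext s
        rw [← Finset.sum_sub_distrib]
        congr 1; funext a
        ring
      rw [hrw]
      calc |∑ s : S, ∑ a : (∀ i, A i),
            (stateDist G μ t s * μ s a - stateDist G ν t s * ν s a) * G.P s a s'|
          ≤ ∑ s : S, |∑ a : (∀ i, A i),
            (stateDist G μ t s * μ s a - stateDist G ν t s * ν s a) * G.P s a s'| :=
            Finset.abs_sum_le_sum_abs _ _
        _ ≤ ∑ s : S, ∑ a : (∀ i, A i),
            |(stateDist G μ t s * μ s a - stateDist G ν t s * ν s a) * G.P s a s'| :=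
            Finset.sum_le_sum fun s _ => Finset.abs_sum_le_sum_abs _ _
        _ = ∑ s : S, ∑ a : (∀ i, A i),
            |stateDist G μ t s * μ s a - stateDist G ν t s * ν s a| * G.P s a s' := by
            apply Finset.sum_congr rfl; intro s _
            apply Finset.sum_congr rfl; intro a _
            rw [abs_mul, abs_of_nonneg ((hG.2.2.2.2.1 s a).1 s')]
    have step2 : (∑ s' : S, ∑ s : S, ∑ a : (∀ i, A i),
        |stateDist G μ t s * μ s a - stateDist G ν t s * ν s a| * G.P s a s') =
        ∑ s : S, ∑ a : (∀ i, A i),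
          |stateDist G μ t s * μ s a - stateDist G ν t s * ν s a| := by
      rw [Finset.sum_comm]
      apply Finset.sum_congr rfl; intro s _
      rw [Finset.sum_comm]
      apply Finset.sum_congr rfl; intro a _
      rw [← Finset.mul_sum, (hG.2.2.2.2.1 s a).2, mul_one]
    have step3 : (∑ s : S, ∑ a : (∀ i, A i),
        |stateDist G μ t s * μ s a - stateDist G ν t s * ν s a|) ≤ d t + e t := by
      have hpt : ∀ (s : S) (a : ∀ i, A i),
          |stateDist G μ t s * μ s a - stateDist G ν t s * ν s a| ≤
            |stateDist G μ t s - stateDist G ν t s| * μ s a +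
              stateDist G ν t s * |μ s a - ν s a| := by
        intro s a
        have hid : stateDist G μ t s * μ s a - stateDist G ν t s * ν s a =
            (stateDist G μ t s - stateDist G ν t s) * μ s a +
              stateDist G ν t s * (μ s a - ν s a) := by ring
        rw [hid]
        calc |(stateDist G μ t s - stateDist G ν t s) * μ s a +
              stateDist G ν t s * (μ s a - ν s a)|
            ≤ |(stateDist G μ t s - stateDist G ν t s) * μ s a| +
              |stateDist G ν t s * (μ s a - ν s a)| := abs_add_le _ _
          _ = |stateDist G μ t s - stateDist G ν t s| * μ s a +
              stateDist G ν t s * |μ s a - ν s a| := by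
              rw [abs_mul, abs_mul, abs_of_nonneg (hμ.1 s a),
                abs_of_nonneg (stateDist_nonneg G hG hν t s)]
      calc (∑ s : S, ∑ a : (∀ i, A i),
            |stateDist G μ t s * μ s a - stateDist G ν t s * ν s a|)
          ≤ ∑ s : S, ∑ a : (∀ i, A i),
            (|stateDist G μ t s - stateDist G ν t s| * μ s a +
              stateDist G ν t s * |μ s a - ν s a|) :=
            Finset.sum_le_sum fun s _ => Finset.sum_le_sum fun a _ => hpt s a
        _ = d t + e t := by
            rw [hd_def, he_def, ← Finset.sum_add_distrib]
            apply Finset.sum_congr rfl; intro s _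
            rw [Finset.sum_add_distrib, ← Finset.mul_sum, ← Finset.mul_sum, hμ.2 s,
              mul_one]
      done
    calc d (t + 1) ≤ _ := step1
      _ = _ := step2
      _ ≤ d t + e t := step3
  -- (1 - γ) X ≤ γ E
  have hXE : (1 - G.γ) * X ≤ G.γ * E := by
    have hshift : X = G.γ ^ 0 * d 0 + ∑' t, G.γ ^ (t + 1) * d (t + 1) :=
      Summable.tsum_eq_zero_add hsd
    have hsd' : Summable (fun t => G.γ ^ (t + 1) * d (t + 1)) := by
      have := (hsd.comp_injective (add_left_injective 1))
      simpa [Function.comp_def] using this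
    have hrhs : Summable (fun t => G.γ ^ (t + 1) * (d t + e t)) := by
      have h1 : Summable (fun t => G.γ * (G.γ ^ t * d t) + G.γ * (G.γ ^ t * e t)) :=
        ((hsd.mul_left G.γ).add (hse.mul_left G.γ))
      refine h1.congr fun t => ?_
      ring
    have hle : (∑' t, G.γ ^ (t + 1) * d (t + 1)) ≤ ∑' t, G.γ ^ (t + 1) * (d t + e t) := by
      apply Summable.tsum_le_tsum _ hsd' hrhs
      intro t
      exact mul_le_mul_of_nonneg_left (hdrec t) (pow_nonneg hγ0 _)
    have heq : (∑' t, G.γ ^ (t + 1) * (d t + e t)) = G.γ * X + G.γ * E := by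
      have h1 : (fun t => G.γ ^ (t + 1) * (d t + e t)) =
          (fun t => G.γ * (G.γ ^ t * d t) + G.γ * (G.γ ^ t * e t)) := by
        funext t; ring
      rw [h1, Summable.tsum_add (hsd.mul_left G.γ) (hse.mul_left G.γ), tsum_mul_left,
        tsum_mul_left]
    have : X ≤ G.γ * X + G.γ * E := by
      calc X = G.γ ^ 0 * d 0 + ∑' t, G.γ ^ (t + 1) * d (t + 1) := hshift
        _ = ∑' t, G.γ ^ (t + 1) * d (t + 1) := by rw [hd0]; simp
        _ ≤ ∑' t, G.γ ^ (t + 1) * (d t + e t) := hle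
        _ = G.γ * X + G.γ * E := heq
    linarith
  -- occupancy L1 difference bound
  have hoccdiff : (∑ s, |occ G μ s - occ G ν s|) ≤ (1 - G.γ) * X := by
    have hpt : ∀ s : S, |occ G μ s - occ G ν s| ≤
        (1 - G.γ) * ∑' t, G.γ ^ t * |stateDist G μ t s - stateDist G ν t s| := by
      intro s
      have h1 : occ G μ s - occ G ν s =
          (1 - G.γ) * ∑' t, G.γ ^ t * (stateDist G μ t s - stateDist G ν t s) := by
        show (1 - G.γ) * _ - (1 - G.γ) * _ = _
        rw [← mul_sub]
        congr 1
        rw [← Summable.tsum_sub (summable_sd G hG hμ s) (summable_sd G hG hν s)]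
        congr 1; funext t; ring
      rw [h1, abs_mul, abs_of_nonneg (le_of_lt h1γ)]
      apply mul_le_mul_of_nonneg_left _ (le_of_lt h1γ)
      have habs : Summable (fun t => |G.γ ^ t * (stateDist G μ t s - stateDist G ν t s)|) := by
        refine Summable.of_nonneg_of_le (fun t => abs_nonneg _) (fun t => ?_) hsum_geom2
        rw [abs_mul, abs_pow, abs_of_nonneg hγ0]
        apply mul_le_mul_of_nonneg_left _ (pow_nonneg hγ0 t)
        calc |stateDist G μ t s - stateDist G ν t s| ≤
            stateDist G μ t s + stateDist G ν t s := by
              have := abs_sub (stateDist G μ t s) (stateDist G ν t s)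
              rwa [abs_of_nonneg (stateDist_nonneg G hG hμ t s),
                abs_of_nonneg (stateDist_nonneg G hG hν t s)] at this
          _ ≤ 2 := by
              have h1 := stateDist_le_one G hG hμ t s
              have h2 := stateDist_le_one G hG hν t s
              linarith
      calc |∑' t, G.γ ^ t * (stateDist G μ t s - stateDist G ν t s)|
          ≤ ∑' t, |G.γ ^ t * (stateDist G μ t s - stateDist G ν t s)| :=
            abs_tsum_le' habs
        _ = ∑' t, G.γ ^ t * |stateDist G μ t s - stateDist G ν t s| := by
            congr 1; funext t
            rw [abs_mul, abs_pow, abs_of_nonneg hγ0]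
    calc (∑ s, |occ G μ s - occ G ν s|)
        ≤ ∑ s, (1 - G.γ) * ∑' t, G.γ ^ t * |stateDist G μ t s - stateDist G ν t s| :=
          Finset.sum_le_sum fun s _ => hpt s
      _ = (1 - G.γ) * ∑ s, ∑' t, G.γ ^ t * |stateDist G μ t s - stateDist G ν t s| := by
          rw [Finset.mul_sum]
      _ = (1 - G.γ) * X := by
          congr 1
          rw [hX_def, ← Summable.tsum_finsetSum (fun s _ => ?_)]
          · congr 1; funext t
            rw [hd_def, Finset.mul_sum]
          · refine Summable.of_nonneg_of_le
              (fun t => mul_nonneg (pow_nonneg hγ0 t) (abs_nonneg _)) (fun t => ?_)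
              hsum_geom2
            apply mul_le_mul_of_nonneg_left _ (pow_nonneg hγ0 t)
            have h1 := stateDist_le_one G hG hμ t s
            have h2 := stateDist_le_one G hG hν t s
            have h3 := stateDist_nonneg G hG hμ t s
            have h4 := stateDist_nonneg G hG hν t s
            rw [abs_sub_le_iff]; constructor <;> linarith
  -- Eocc = (1-γ) E
  have hEocc : (∑ s, occ G ν s * L s) = (1 - G.γ) * E := by
    have hpt : ∀ s : S, occ G ν s * L s =
        (1 - G.γ) * ∑' t, G.γ ^ t * stateDist G ν t s * L s := by
      intro s
      show ((1 - G.γ) * ∑' t, G.γ ^ t * stateDist G ν t s) * L s = _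
      rw [mul_assoc]
      congr 1
      rw [← tsum_mul_right]
    calc (∑ s, occ G ν s * L s)
        = (1 - G.γ) * ∑ s, ∑' t, G.γ ^ t * stateDist G ν t s * L s := by
          rw [Finset.mul_sum]
          exact Finset.sum_congr rfl fun s _ => hpt s
      _ = (1 - G.γ) * E := by
          congr 1
          rw [hE_def, ← Summable.tsum_finsetSum (fun s _ => ?_)]
          · congr 1; funext t
            rw [he_def, Finset.mul_sum]
            apply Finset.sum_congr rfl; intro s _
            ring
          · have : (fun t => G.γ ^ t * stateDist G ν t s * L s) =
                (fun t => (G.γ ^ t * stateDist G ν t s) * L s) := by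
              funext t; ring
            rw [this]
            exact (summable_sd G hG hν s).mul_right _
  -- value difference
  have hval : value G i μ - value G i ν = (1 / (1 - G.γ)) *
      ∑ s : S, ∑ a : (∀ i, A i), (saOcc G μ s a - saOcc G ν s a) * G.r i s a := by
    show (1 / (1 - G.γ)) * _ - (1 / (1 - G.γ)) * _ = _
    rw [← mul_sub]
    congr 1
    rw [← Finset.sum_sub_distrib]
    apply Finset.sum_congr rfl; intro s _
    rw [← Finset.sum_sub_distrib]
    apply Finset.sum_congr rfl; intro a _
    ring
  have hbound : |value G i μ - value G i ν| ≤ (1 / (1 - G.γ)) *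
      ((∑ s, |occ G μ s - occ G ν s|) + ∑ s, occ G ν s * L s) := by
    rw [hval, abs_mul, abs_of_nonneg (by positivity : (0:ℝ) ≤ 1 / (1 - G.γ))]
    apply mul_le_mul_of_nonneg_left _ (by positivity : (0:ℝ) ≤ 1 / (1 - G.γ))
    calc |∑ s : S, ∑ a : (∀ i, A i), (saOcc G μ s a - saOcc G ν s a) * G.r i s a|
        ≤ ∑ s : S, |∑ a : (∀ i, A i), (saOcc G μ s a - saOcc G ν s a) * G.r i s a| :=
          Finset.abs_sum_le_sum_abs _ _
      _ ≤ ∑ s : S, ∑ a : (∀ i, A i), |(saOcc G μ s a - saOcc G ν s a) * G.r i s a| :=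
          Finset.sum_le_sum fun s _ => Finset.abs_sum_le_sum_abs _ _
      _ ≤ ∑ s : S, ∑ a : (∀ i, A i), |saOcc G μ s a - saOcc G ν s a| := by
          apply Finset.sum_le_sum; intro s _
          apply Finset.sum_le_sum; intro a _
          rw [abs_mul]
          calc |saOcc G μ s a - saOcc G ν s a| * |G.r i s a|
              ≤ |saOcc G μ s a - saOcc G ν s a| * 1 :=
                mul_le_mul_of_nonneg_left (hG.2.2.2.2.2 i s a) (abs_nonneg _)
            _ = _ := mul_one _
      _ ≤ ∑ s : S, (|occ G μ s - occ G ν s| + occ G ν s * L s) := by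
          apply Finset.sum_le_sum; intro s _
          have hpt : ∀ a : (∀ i, A i), |saOcc G μ s a - saOcc G ν s a| ≤
              |occ G μ s - occ G ν s| * μ s a + occ G ν s * |μ s a - ν s a| := by
            intro a
            show |occ G μ s * μ s a - occ G ν s * ν s a| ≤ _
            have hid : occ G μ s * μ s a - occ G ν s * ν s a =
                (occ G μ s - occ G ν s) * μ s a + occ G ν s * (μ s a - ν s a) := by
              ring
            rw [hid]
            calc |(occ G μ s - occ G ν s) * μ s a + occ G ν s * (μ s a - ν s a)|
                ≤ |(occ G μ s - occ G ν s) * μ s a| + |occ G ν s * (μ s a - ν s a)| :=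
                  abs_add_le _ _
              _ = |occ G μ s - occ G ν s| * μ s a + occ G ν s * |μ s a - ν s a| := by
                  rw [abs_mul, abs_mul, abs_of_nonneg (hμ.1 s a),
                    abs_of_nonneg (occ_nonneg G hG hν s)]
          calc (∑ a : (∀ i, A i), |saOcc G μ s a - saOcc G ν s a|)
              ≤ ∑ a : (∀ i, A i), (|occ G μ s - occ G ν s| * μ s a +
                  occ G ν s * |μ s a - ν s a|) := Finset.sum_le_sum fun a _ => hpt a
            _ = |occ G μ s - occ G ν s| + occ G ν s * L s := by
                rw [Finset.sum_add_distrib, ← Finset.mul_sum, ← Finset.mul_sum,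
                  hμ.2 s, mul_one, hL_def]
      _ = (∑ s, |occ G μ s - occ G ν s|) + ∑ s, occ G ν s * L s :=
          Finset.sum_add_distrib
  -- combine
  have hEocc_nonneg : 0 ≤ ∑ s, occ G ν s * L s :=
    Finset.sum_nonneg fun s _ => mul_nonneg (occ_nonneg G hG hν s) (hL_nonneg s)
  have hfinal : (∑ s, |occ G μ s - occ G ν s|) + (∑ s, occ G ν s * L s) ≤
      (1 / (1 - G.γ)) * ∑ s, occ G ν s * L s := by
    have h1 : (∑ s, |occ G μ s - occ G ν s|) ≤ G.γ * E := le_trans hoccdiff hXE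
    have h2 : G.γ * E = (G.γ / (1 - G.γ)) * ∑ s, occ G ν s * L s := by
      rw [hEocc]
      field_simp
    have h3 : (G.γ / (1 - G.γ)) * (∑ s, occ G ν s * L s) + (∑ s, occ G ν s * L s) =
        (1 / (1 - G.γ)) * ∑ s, occ G ν s * L s := by
      have hne : (1 - G.γ) ≠ 0 := ne_of_gt h1γ
      field_simp
      ring
    linarith [h1, h2.symm.le]
  calc |value G i μ - value G i ν|
      ≤ (1 / (1 - G.γ)) *
        ((∑ s, |occ G μ s - occ G ν s|) + ∑ s, occ G ν s * L s) := hbound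
    _ ≤ (1 / (1 - G.γ)) * ((1 / (1 - G.γ)) * ∑ s, occ G ν s * L s) :=
        mul_le_mul_of_nonneg_left hfinal (by positivity)
    _ = (1 / (1 - G.γ) ^ 2) * ∑ s, occ G ν s * L s := by
        rw [← mul_assoc]
        congr 1
        field_simp

/-- L1 distance between product distributions is at most the sum of marginal L1s. -/
lemma prod_L1_le (p q : ∀ i, A i → ℝ)
    (hp0 : ∀ i b, 0 ≤ p i b) (hp1 : ∀ i, ∑ b, p i b = 1)
    (hq0 : ∀ i b, 0 ≤ q i b) (hq1 : ∀ i, ∑ b, q i b = 1) :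
    (∑ a : ∀ i, A i, |(∏ i, p i (a i)) - ∏ i, q i (a i)|) ≤
      ∑ i, ∑ b, |p i b - q i b| := by
  classical
  have key : ∀ T : Finset (Fin n),
      (∑ a : ∀ i, A i, |(∏ i, (if i ∈ T then p i else q i) (a i)) - ∏ i, q i (a i)|) ≤
        ∑ i ∈ T, ∑ b, |p i b - q i b| := by
    intro T
    induction T using Finset.induction_on with
    | empty => simp
    | @insert j T hj ih =>
      set h : ∀ i, A i → ℝ := fun i => if i ∈ T then p i else q i with hh
      set h' : ∀ i, A i → ℝ := fun i => if i ∈ insert j T then p i else q i with hh'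
      have hh'j : h' j = p j := by simp [hh']
      have hhj : h j = q j := by simp [hh, hj]
      have hagree : ∀ i, i ≠ j → h' i = h i := by
        intro i hij
        simp only [hh', hh, Finset.mem_insert]
        by_cases hiT : i ∈ T <;> simp [hiT, hij]
      have h0 : ∀ i b, 0 ≤ h i b := by
        intro i b; simp only [hh]; split <;> [exact hp0 i b; exact hq0 i b]
      have h1 : ∀ i, ∑ b, h i b = 1 := by
        intro i; simp only [hh]; split <;> [exact hp1 i; exact hq1 i]
      have hstep : ∀ a : ∀ i, A i,
          (∏ i, h' i (a i)) - (∏ i, h i (a i)) =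
            (p j (a j) - q j (a j)) * ∏ i ∈ Finset.univ.erase j, h i (a i) := by
        intro a
        have e1 : (∏ i, h' i (a i)) =
            h' j (a j) * ∏ i ∈ Finset.univ.erase j, h' i (a i) :=
          (Finset.mul_prod_erase Finset.univ _ (Finset.mem_univ j)).symm
        have e2 : (∏ i, h i (a i)) =
            h j (a j) * ∏ i ∈ Finset.univ.erase j, h i (a i) :=
          (Finset.mul_prod_erase Finset.univ _ (Finset.mem_univ j)).symm
        have e3 : (∏ i ∈ Finset.univ.erase j, h' i (a i)) =
            ∏ i ∈ Finset.univ.erase j, h i (a i) := by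
          apply Finset.prod_congr rfl
          intro i hi
          rw [hagree i (Finset.ne_of_mem_erase hi)]
        rw [e1, e2, e3, hh'j, hhj, ← sub_mul]
      have hfirst : (∑ a : ∀ i, A i, |(∏ i, h' i (a i)) - ∏ i, h i (a i)|) =
          ∑ b, |p j b - q j b| := by
        have hF : ∀ a : ∀ i, A i,
            |(∏ i, h' i (a i)) - ∏ i, h i (a i)| =
              ∏ i, (Function.update h j (fun b => |p j b - q j b|)) i (a i) := by
          intro a
          rw [hstep a, abs_mul]
          have e2 : (∏ i, (Function.update h j (fun b => |p j b - q j b|)) i (a i)) =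
              (Function.update h j (fun b => |p j b - q j b|)) j (a j) *
                ∏ i ∈ Finset.univ.erase j,
                  (Function.update h j (fun b => |p j b - q j b|)) i (a i) :=
            (Finset.mul_prod_erase Finset.univ _ (Finset.mem_univ j)).symm
          rw [e2, Function.update_self]
          congr 1
          rw [abs_of_nonneg (Finset.prod_nonneg fun i hi => h0 i (a i))]
          apply Finset.prod_congr rfl
          intro i hi
          rw [Function.update_of_ne (Finset.ne_of_mem_erase hi)]
        calc (∑ a : ∀ i, A i, |(∏ i, h' i (a i)) - ∏ i, h i (a i)|)
            = ∑ a : ∀ i, A i,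
                ∏ i, (Function.update h j (fun b => |p j b - q j b|)) i (a i) :=
              Finset.sum_congr rfl fun a _ => hF a
          _ = ∏ i, ∑ b, (Function.update h j (fun b => |p j b - q j b|)) i b :=
              (Fintype.prod_sum _).symm
          _ = ∑ b, |p j b - q j b| := by
              rw [← Finset.mul_prod_erase Finset.univ _ (Finset.mem_univ j),
                Function.update_self]
              have : (∏ i ∈ Finset.univ.erase j,
                  ∑ b, (Function.update h j (fun b => |p j b - q j b|)) i b) = 1 := by
                apply Finset.prod_eq_one
                intro i hi
                rw [Function.update_of_ne (Finset.ne_of_mem_erase hi)]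
                exact h1 i
              rw [this, mul_one]
      calc (∑ a : ∀ i, A i, |(∏ i, h' i (a i)) - ∏ i, q i (a i)|)
          ≤ ∑ a : ∀ i, A i, (|(∏ i, h' i (a i)) - ∏ i, h i (a i)| +
              |(∏ i, h i (a i)) - ∏ i, q i (a i)|) := by
            apply Finset.sum_le_sum; intro a _
            exact abs_sub_le _ _ _
        _ = (∑ a : ∀ i, A i, |(∏ i, h' i (a i)) - ∏ i, h i (a i)|) +
              ∑ a : ∀ i, A i, |(∏ i, h i (a i)) - ∏ i, q i (a i)| :=
            Finset.sum_add_distrib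
        _ ≤ (∑ b, |p j b - q j b|) + ∑ i ∈ T, ∑ b, |p i b - q i b| := by
            rw [hfirst]
            exact add_le_add le_rfl ih
        _ = ∑ i ∈ insert j T, ∑ b, |p i b - q i b| :=
            (Finset.sum_insert (f := fun i => ∑ b, |p i b - q i b|) hj).symm
  have := key Finset.univ
  simpa using this

end Aux

/-- if `π^E` is a weak Dominant Strategy Equilibrium, then any
behavioral cloning policy `π` with BC error `ε_BC ≤ ε (1-γ)² / (2n)` is an
`ε`-Nash equilibrium. -/
theorem dse_eps_nash {n : ℕ} {S : Type} {A : Fin n → Type}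
    [Fintype S] [∀ i, Fintype (A i)] (hn : 0 < n)
    (G : Game n S A) (hG : IsGame G)
    (πE π : ∀ i, S → A i → ℝ)
    (hE : ∀ i, IsPol (πE i)) (hπ : ∀ i, IsPol (π i))
    (hDSE : ∀ (i : Fin n) (ρ : ∀ j, S → A j → ℝ), (∀ j, IsPol (ρ j)) →
      value G i (joint ρ) ≤ value G i (joint (dev ρ i (πE i))))
    (ε εBC : ℝ) (hBC : ∀ i, bcErr G πE π i ≤ εBC)
    (hε : εBC ≤ ε * (1 - G.γ) ^ 2 / (2 * n)) :
    ∀ (i : Fin n) (πi' : S → A i → ℝ), IsPol πi' →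
      value G i (joint (dev π i πi')) - value G i (joint π) ≤ ε := by
  intro i πi' hπi'
  classical
  have hγ0 := hG.1
  have hγ1 := hG.2.1
  have h1γ : (0:ℝ) < 1 - G.γ := by linarith
  have hp2 : (0:ℝ) < (1 - G.γ) ^ 2 := by positivity
  have hn' : (0:ℝ) < n := by exact_mod_cast hn
  have hdevpol : ∀ j, IsPol (dev π i πi' j) := by
    intro j
    by_cases h : j = i
    · subst h; simpa [dev] using hπi'
    · simpa [dev, Function.update_of_ne h] using hπ j
  set σ : ∀ j, S → A j → ℝ := dev π i (πE i) with hσdef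
  have hσi : σ i = πE i := by
    rw [hσdef]; simp [dev]
  have hσj : ∀ j, j ≠ i → σ j = π j := by
    intro j hj
    rw [hσdef]; simp [dev, Function.update_of_ne hj]
  have hσpol : ∀ j, IsPol (σ j) := by
    intro j
    by_cases h : j = i
    · subst h; rw [hσi]; exact hE j
    · rw [hσj j h]; exact hπ j
  -- DSE step
  have h1 : value G i (joint (dev π i πi')) ≤ value G i (joint σ) := by
    have h := hDSE i (dev π i πi') hdevpol
    have heq : dev (dev π i πi') i (πE i) = σ := by
      rw [hσdef]
      simp only [dev, Function.update_idem]
    rwa [heq] at h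
  -- key bound: joint L1 against expert occupancy
  have hEpol : IsPol (joint πE) := isPol_joint hE
  have hkey : ∀ (ρ : ∀ j, S → A j → ℝ), (∀ j, IsPol (ρ j)) →
      (∑ s, occ G (joint πE) s * ∑ a : (∀ j, A j), |joint ρ s a - joint πE s a|) ≤
        ∑ j, ∑ s, occ G (joint πE) s * ∑ b, |ρ j s b - πE j s b| := by
    intro ρ hρ
    rw [Finset.sum_comm]
    apply Finset.sum_le_sum
    intro s _
    rw [← Finset.mul_sum]
    apply mul_le_mul_of_nonneg_left _ (occ_nonneg G hG hEpol s)
    exact prod_L1_le (fun j => ρ j s) (fun j => πE j s) (fun j b => (hρ j).1 s b)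
      (fun j => (hρ j).2 s) (fun j b => (hE j).1 s b) (fun j => (hE j).2 s)
  have hεnn : 0 ≤ εBC :=
    le_trans (Finset.sum_nonneg fun s _ => mul_nonneg (occ_nonneg G hG hEpol s)
      (Finset.sum_nonneg fun b _ => abs_nonneg _)) (hBC i)
  have hsum_n : ∀ (ρ : ∀ j, S → A j → ℝ),
      (∀ j, (∑ s, occ G (joint πE) s * ∑ b, |ρ j s b - πE j s b|) ≤ εBC) →
      (∑ j, ∑ s, occ G (joint πE) s * ∑ b, |ρ j s b - πE j s b|) ≤ n * εBC := by
    intro ρ h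
    calc (∑ j, ∑ s, occ G (joint πE) s * ∑ b, |ρ j s b - πE j s b|)
        ≤ ∑ _j : Fin n, εBC := Finset.sum_le_sum fun j _ => h j
      _ = n * εBC := by
        rw [Finset.sum_const, Finset.card_univ, Fintype.card_fin, nsmul_eq_mul]
  have bound : ∀ (ρ : ∀ j, S → A j → ℝ), (∀ j, IsPol (ρ j)) →
      (∀ j, (∑ s, occ G (joint πE) s * ∑ b, |ρ j s b - πE j s b|) ≤ εBC) →
      |value G i (joint ρ) - value G i (joint πE)| ≤
        (1 / (1 - G.γ) ^ 2) * (n * εBC) := by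
    intro ρ hρ hρE
    calc |value G i (joint ρ) - value G i (joint πE)|
        ≤ (1 / (1 - G.γ) ^ 2) *
            ∑ s, occ G (joint πE) s * ∑ a, |joint ρ s a - joint πE s a| :=
          value_diff_le G hG (isPol_joint hρ) hEpol i
      _ ≤ (1 / (1 - G.γ) ^ 2) * (n * εBC) := by
          apply mul_le_mul_of_nonneg_left _ (by positivity)
          exact le_trans (hkey ρ hρ) (hsum_n ρ hρE)
  have hA : |value G i (joint σ) - value G i (joint πE)| ≤
      (1 / (1 - G.γ) ^ 2) * (n * εBC) := by
    apply bound σ hσpol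
    intro j
    by_cases h : j = i
    · subst h
      rw [hσi]
      simp
      exact hεnn
    · rw [hσj j h]
      exact hBC j
  have hB : |value G i (joint π) - value G i (joint πE)| ≤
      (1 / (1 - G.γ) ^ 2) * (n * εBC) := bound π hπ hBC
  have harith : (1 / (1 - G.γ) ^ 2) * (n * εBC) + (1 / (1 - G.γ) ^ 2) * (n * εBC) ≤ ε := by
    have h2n : (0:ℝ) < 2 * n := by linarith
    have hεbc : εBC * (2 * n) ≤ ε * (1 - G.γ) ^ 2 := (le_div_iff₀ h2n).mp hε
    have heq : (1 / (1 - G.γ) ^ 2) * (n * εBC) + (1 / (1 - G.γ) ^ 2) * (n * εBC) =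
        (εBC * (2 * n)) / (1 - G.γ) ^ 2 := by
      field_simp
      ring
    rw [heq, div_le_iff₀ hp2]
    calc εBC * (2 * n) ≤ ε * (1 - G.γ) ^ 2 := hεbc
      _ = ε * (1 - G.γ) ^ 2 := rfl
  have h2 : value G i (joint σ) - value G i (joint π) ≤
      (1 / (1 - G.γ) ^ 2) * (n * εBC) + (1 / (1 - G.γ) ^ 2) * (n * εBC) := by
    have ha := le_trans (le_abs_self _) hA
    have hb := le_trans (neg_le_abs _) hB
    have : -(value G i (joint π) - value G i (joint πE)) =
        value G i (joint πE) - value G i (joint π) := by ring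
    rw [this] at hb
    linarith
  linarith [le_trans (by linarith : value G i (joint (dev π i πi')) -
    value G i (joint π) ≤ value G i (joint σ) - value G i (joint π)) h2, harith]

end MAIL
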